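/- For q ≥ 2 and an infinite-dimensional irreducible highest-weight sl(2,K)-module V(λ) with λ ∉ ℕ, the q-th exterior power Λ^q(V(λ)) is a reducible sl(2,K)-module. -/

import Mathlib

variable (K : Type*) [Field K] [CharZero K]

/-- The basis vector `f_i` of `V(λ)`, viewed inside the exterior algebra `Λ^*(V(λ))`. -/
noncomputable def f (i : ℕ) : ExteriorAlgebra K (ℕ →₀ K) :=
  ExteriorAlgebra.ι K (Finsupp.single i (1 : K))

/-- The monomial `f_{i_1} ∧ ... ∧ f_{i_q}`. -/
noncomputable def mono (s : Finset ℕ) : ExteriorAlgebra K (ℕ →₀ K) :=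
  ((s.sort (· ≤ ·)).map (f K)).prod

/-- `Λ^q(V(λ))`: the span of the monomials `f_{i_1} ∧ ... ∧ f_{i_q}`,
`0 ≤ i_1 < ... < i_q`. -/
noncomputable def LamDeg (q : ℕ) : Submodule K (ExteriorAlgebra K (ℕ →₀ K)) :=
  Submodule.span K {x | ∃ s : Finset ℕ, s.card = q ∧ x = mono K s}

set_option linter.unusedSectionVars false

namespace Aux14

variable {K}

/-- span of all products of `f`'s -/
noncomputable def P (K : Type*) [Field K] [CharZero K] :
    Submodule K (ExteriorAlgebra K (ℕ →₀ K)) :=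
  Submodule.span K {x | ∃ l : List ℕ, x = (l.map (f K)).prod}

lemma prod_mem_P (l : List ℕ) : (l.map (f K)).prod ∈ P K :=
  Submodule.subset_span ⟨l, rfl⟩

lemma mul_f_mem_P (a : ℕ) {x : ExteriorAlgebra K (ℕ →₀ K)} (hx : x ∈ P K) :
    f K a * x ∈ P K := by
  induction hx using Submodule.span_induction with
  | mem x hx => obtain ⟨l, rfl⟩ := hx; exact Submodule.subset_span ⟨a :: l, by simp⟩
  | zero => simp [Submodule.zero_mem]
  | add x y hx hy ihx ihy => rw [mul_add]; exact Submodule.add_mem _ ihx ihy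
  | smul c x hx ihx => rw [mul_smul_comm]; exact Submodule.smul_mem _ _ ihx

/-- a Leibniz endomorphism kills 1 -/
lemma der_one (D : Module.End K (ExteriorAlgebra K (ℕ →₀ K)))
    (hD : ∀ x y, D (x * y) = D x * y + x * D y) : D 1 = 0 := by
  have h := hD 1 1
  rw [mul_one, one_mul, mul_one] at h
  have : D 1 + 0 = D 1 + D 1 := by rw [add_zero]; exact h
  exact (add_left_cancel this).symm

lemma der_stable (D : Module.End K (ExteriorAlgebra K (ℕ →₀ K)))
    (hD : ∀ x y, D (x * y) = D x * y + x * D y)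
    (hDf : ∀ i, ∃ (r : K) (j : ℕ), D (f K i) = r • f K j) :
    ∀ x ∈ P K, D x ∈ P K := by
  have key : ∀ l : List ℕ, D ((l.map (f K)).prod) ∈ P K := by
    intro l
    induction l with
    | nil => simp [der_one D hD, Submodule.zero_mem]
    | cons a t ih =>
      rw [List.map_cons, List.prod_cons, hD]
      refine Submodule.add_mem _ ?_ (mul_f_mem_P a ih)
      obtain ⟨r, j, hj⟩ := hDf a
      rw [hj, smul_mul_assoc]
      exact Submodule.smul_mem _ _ (prod_mem_P (j :: t))
  intro x hx
  induction hx using Submodule.span_induction with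
  | mem x hx => obtain ⟨l, rfl⟩ := hx; exact key l
  | zero => simp [Submodule.zero_mem]
  | add x y hx hy ihx ihy => rw [map_add]; exact Submodule.add_mem _ ihx ihy
  | smul c x hx ihx => rw [map_smul]; exact Submodule.smul_mem _ _ ihx

lemma der_vanish (D : Module.End K (ExteriorAlgebra K (ℕ →₀ K)))
    (hD : ∀ x y, D (x * y) = D x * y + x * D y)
    (hDf : ∀ i, D (f K i) = 0) :
    ∀ x ∈ P K, D x = 0 := by
  have key : ∀ l : List ℕ, D ((l.map (f K)).prod) = 0 := by
    intro l
    induction l with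
    | nil => simpa using der_one D hD
    | cons a t ih => rw [List.map_cons, List.prod_cons, hD, hDf, ih, zero_mul, mul_zero, add_zero]
  intro x hx
  induction hx using Submodule.span_induction with
  | mem x hx => obtain ⟨l, rfl⟩ := hx; exact key l
  | zero => simp
  | add x y hx hy ihx ihy => rw [map_add, ihx, ihy, add_zero]
  | smul c x hx ihx => rw [map_smul, ihx, smul_zero]


section comm
variable (lam : K) (Xe Ye He : Module.End K (ExteriorAlgebra K (ℕ →₀ K)))
    (hXL : ∀ x y, Xe (x * y) = Xe x * y + x * Xe y)
    (hYL : ∀ x y, Ye (x * y) = Ye x * y + x * Ye y)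
    (hHL : ∀ x y, He (x * y) = He x * y + x * He y)
    (hX0 : Xe (f K 0) = 0)
    (hX : ∀ i : ℕ, Xe (f K (i + 1)) = (lam - ((i : K) + 1) + 1) • f K i)
    (hY : ∀ i : ℕ, Ye (f K i) = ((i : K) + 1) • f K (i + 1))
    (hH : ∀ i : ℕ, He (f K i) = (lam - 2 * (i : K)) • f K i)

include hXL hYL hHL hX0 hX hY hH in
lemma comm1 : ∀ x ∈ P K, Xe (Ye x) = Ye (Xe x) + He x := by
  set D : Module.End K (ExteriorAlgebra K (ℕ →₀ K)) := Xe ∘ₗ Ye - Ye ∘ₗ Xe - He with hDdef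
  have hD : ∀ x y, D (x * y) = D x * y + x * D y := by
    intro x y
    simp only [hDdef, LinearMap.sub_apply, LinearMap.comp_apply, hXL, hYL, hHL, map_add,
      sub_mul, mul_sub]
    abel
  have hDf : ∀ i, D (f K i) = 0 := by
    intro i
    simp only [hDdef, LinearMap.sub_apply, LinearMap.comp_apply]
    cases i with
    | zero =>
      rw [hY 0, map_smul, hX 0, hX0, map_zero, hH 0]
      push_cast
      module
    | succ i =>
      rw [hY (i + 1), map_smul, hX (i + 1), hX i, map_smul, hY i, hH (i + 1)]
      push_cast
      module
  intro x hx
  have := der_vanish D hD hDf x hx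
  simp only [hDdef, LinearMap.sub_apply, LinearMap.comp_apply] at this
  have h2 : Xe (Ye x) - Ye (Xe x) - He x = 0 := this
  linear_combination (norm := abel) h2

include hYL hHL hY hH in
lemma comm2 : ∀ x ∈ P K, He (Ye x) = Ye (He x) - 2 • Ye x := by
  set D : Module.End K (ExteriorAlgebra K (ℕ →₀ K)) := He ∘ₗ Ye - Ye ∘ₗ He + 2 • Ye with hDdef
  have hD : ∀ x y, D (x * y) = D x * y + x * D y := by
    intro x y
    simp only [hDdef, LinearMap.add_apply, LinearMap.sub_apply, LinearMap.comp_apply,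
      LinearMap.smul_apply, hYL, hHL, map_add, sub_mul, mul_sub, add_mul, mul_add, smul_add,
      smul_mul_assoc, mul_smul_comm]
    abel
  have hDf : ∀ i, D (f K i) = 0 := by
    intro i
    simp only [hDdef, LinearMap.add_apply, LinearMap.sub_apply, LinearMap.comp_apply,
      LinearMap.smul_apply]
    rw [hY i, map_smul, hH (i + 1), hH i, map_smul, hY i]
    push_cast
    module
  intro x hx
  have := der_vanish D hD hDf x hx
  simp only [hDdef, LinearMap.add_apply, LinearMap.sub_apply, LinearMap.comp_apply,
    LinearMap.smul_apply] at this
  have h2 : He (Ye x) - Ye (He x) + 2 • Ye x = 0 := this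
  linear_combination (norm := abel) h2

include hHL hH in
lemma He_prod : ∀ l : List ℕ,
    He ((l.map (f K)).prod) = (((l.length : K)) * lam - 2 * ((l.sum : ℕ) : K)) • (l.map (f K)).prod := by
  intro l
  induction l with
  | nil => simp [der_one He hHL]
  | cons a t ih =>
    rw [List.map_cons, List.prod_cons, hHL, hH, ih, smul_mul_assoc, mul_smul_comm, ← add_smul]
    congr 1
    push_cast [List.length_cons, List.sum_cons]
    ring
end comm
end Aux14


section mulzero
variable {K : Type*} [Field K] [CharZero K]

lemma f_sq (a : ℕ) : f K a * f K a = 0 := ExteriorAlgebra.ι_sq_zero _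

lemma f_swap (a b : ℕ) : f K a * f K b = -(f K b * f K a) :=
  eq_neg_of_add_eq_zero_left (ExteriorAlgebra.ι_add_mul_swap _ _)

lemma f_mul_prod_eq_zero : ∀ (l : List ℕ) {c : ℕ}, c ∈ l →
    f K c * (l.map (f K)).prod = 0 := by
  intro l
  induction l with
  | nil => intro c hc; simp at hc
  | cons a t ih =>
    intro c hc
    rw [List.map_cons, List.prod_cons]
    rcases List.mem_cons.mp hc with h | h
    · subst h; rw [← mul_assoc, f_sq, zero_mul]
    · rw [← mul_assoc, f_swap c a, neg_mul, mul_assoc, ih h, mul_zero, neg_zero]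

lemma prod_mul_f_eq_zero : ∀ (l : List ℕ) {c : ℕ}, c ∈ l →
    (l.map (f K)).prod * f K c = 0 := by
  intro l
  induction l using List.reverseRecOn with
  | nil => intro c hc; simp at hc
  | append_singleton l a ih =>
    intro c hc
    rw [List.map_append, List.prod_append, List.map_singleton, List.prod_singleton, mul_assoc]
    rcases (List.mem_append.mp hc) with h | h
    · rw [f_swap a c, mul_neg, ← mul_assoc, ih h, zero_mul, neg_zero]
    · rw [List.mem_singleton] at h; subst h; rw [f_sq, mul_zero]

lemma Xe_range_prod (lam : K) (Xe : Module.End K (ExteriorAlgebra K (ℕ →₀ K)))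
    (hXL : ∀ x y, Xe (x * y) = Xe x * y + x * Xe y)
    (hX0 : Xe (f K 0) = 0)
    (hX : ∀ i : ℕ, Xe (f K (i + 1)) = (lam - ((i : K) + 1) + 1) • f K i) :
    ∀ q : ℕ, Xe (((List.range q).map (f K)).prod) = 0 := by
  intro q
  induction q with
  | zero => simpa using Aux14.der_one Xe hXL
  | succ n ih =>
    rw [List.range_succ, List.map_append, List.prod_append, List.map_singleton,
      List.prod_singleton, hXL, ih, zero_mul, zero_add]
    cases n with
    | zero => simp [hX0]
    | succ i =>
      rw [hX i, mul_smul_comm, prod_mul_f_eq_zero _ (by simp [List.mem_range]), smul_zero]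

end mulzero

section monoLemmas
variable {K : Type*} [Field K] [CharZero K]

lemma mono_insert {a : ℕ} {s : Finset ℕ} (h : ∀ b ∈ s, a < b) :
    f K a * mono K s = mono K (insert a s) := by
  have hns : a ∉ s := fun hmem => lt_irrefl a (h a hmem)
  rw [mono, mono, Finset.sort_insert (· ≤ ·) (fun b hb => le_of_lt (h b hb)) hns,
    List.map_cons, List.prod_cons]

lemma sorted_prod_eq_mono : ∀ {l : List ℕ}, l.Pairwise (· < ·) →
    (l.map (f K)).prod = mono K l.toFinset := by
  intro l
  induction l with
  | nil => intro _; simp [mono]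
  | cons a t ih =>
    intro hs
    have hst := (List.pairwise_cons.mp hs).2
    rw [List.map_cons, List.prod_cons, ih hst, List.toFinset_cons,
      mono_insert (fun b hb => (List.pairwise_cons.mp hs).1 b (List.mem_toFinset.mp hb))]

/-- span of monomials with `card = q` and all entries `≥ b` -/
noncomputable def Mlow (K : Type*) [Field K] [CharZero K] (q b : ℕ) :
    Submodule K (ExteriorAlgebra K (ℕ →₀ K)) :=
  Submodule.span K {x | ∃ s : Finset ℕ, s.card = q ∧ (∀ i ∈ s, b ≤ i) ∧ x = mono K s}

lemma Mlow_le_LamDeg (q b : ℕ) : Mlow K q b ≤ LamDeg K q := by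
  apply Submodule.span_le.mpr
  rintro x ⟨s, hcard, _, rfl⟩
  exact Submodule.subset_span ⟨s, hcard, rfl⟩

lemma f_mul_Mlow {a b q' : ℕ} (hba : b ≤ a) {x : ExteriorAlgebra K (ℕ →₀ K)}
    (hx : x ∈ Mlow K q' (a + 1)) : f K a * x ∈ Mlow K (q' + 1) b := by
  induction hx using Submodule.span_induction with
  | mem x hx =>
    obtain ⟨s, hcard, hbound, rfl⟩ := hx
    have hlt : ∀ i ∈ s, a < i := fun i hi => Nat.lt_of_succ_le (hbound i hi)
    rw [mono_insert hlt]
    refine Submodule.subset_span ⟨insert a s, ?_, ?_, rfl⟩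
    · rw [Finset.card_insert_of_notMem (fun hmem => lt_irrefl a (hlt a hmem)), hcard]
    · intro i hi
      rcases Finset.mem_insert.mp hi with h | h
      · omega
      · exact le_trans (by omega) (hbound i h)
  | zero => simp [Submodule.zero_mem]
  | add x y hx hy ihx ihy => rw [mul_add]; exact Submodule.add_mem _ ihx ihy
  | smul c x hx ihx => rw [mul_smul_comm]; exact Submodule.smul_mem _ _ ihx

lemma Ye_prod_mem (Ye : Module.End K (ExteriorAlgebra K (ℕ →₀ K)))
    (hYL : ∀ x y, Ye (x * y) = Ye x * y + x * Ye y)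
    (hY : ∀ i : ℕ, Ye (f K i) = ((i : K) + 1) • f K (i + 1)) :
    ∀ (l : List ℕ) (b : ℕ), l.Pairwise (· < ·) → (∀ i ∈ l, b ≤ i) →
      Ye ((l.map (f K)).prod) ∈ Mlow K l.length b := by
  intro l
  induction l with
  | nil => intro b _ _; simpa [Aux14.der_one Ye hYL] using Submodule.zero_mem _
  | cons a t ih =>
    intro b hs hb
    have hst := (List.pairwise_cons.mp hs).2
    have hta : ∀ i ∈ t, a < i := (List.pairwise_cons.mp hs).1
    have hba : b ≤ a := hb a (List.mem_cons_self (a := a) (l := t))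
    rw [List.map_cons, List.prod_cons, hYL, hY]
    refine Submodule.add_mem _ ?_ ?_
    · -- ((a:K)+1) • (f (a+1) * prod t)
      rw [smul_mul_assoc]
      refine Submodule.smul_mem _ _ ?_
      by_cases hmem : a + 1 ∈ t
      · rw [f_mul_prod_eq_zero t hmem]; exact Submodule.zero_mem _
      · have hsorted : ((a + 1) :: t).Pairwise (· < ·) := by
          refine List.pairwise_cons.mpr ⟨fun i hi => ?_, hst⟩
          have h1 := hta i hi
          have h2 : a + 1 ≠ i := fun h => hmem (h ▸ hi)
          omega
        have : f K (a + 1) * (t.map (f K)).prod = mono K (((a + 1) :: t).toFinset) := by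
          rw [← sorted_prod_eq_mono hsorted, List.map_cons, List.prod_cons]
        rw [this]
        refine Submodule.subset_span ⟨((a + 1) :: t).toFinset, ?_, ?_, rfl⟩
        · rw [List.toFinset_card_of_nodup hsorted.nodup]; simp
        · intro i hi
          rcases List.mem_cons.mp (List.mem_toFinset.mp hi) with rfl | h
          · omega
          · exact le_trans (by omega : b ≤ a + 1) (Nat.succ_le_of_lt (hta _ h))
    · -- f a * Ye (prod t)
      have h2 := ih (a + 1) hst (fun i hi => Nat.succ_le_of_lt (hta i hi))
      simpa using f_mul_Mlow hba h2

lemma Ye_LamDeg (Ye : Module.End K (ExteriorAlgebra K (ℕ →₀ K)))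
    (hYL : ∀ x y, Ye (x * y) = Ye x * y + x * Ye y)
    (hY : ∀ i : ℕ, Ye (f K i) = ((i : K) + 1) • f K (i + 1))
    (q : ℕ) {x : ExteriorAlgebra K (ℕ →₀ K)} (hx : x ∈ LamDeg K q) :
    Ye x ∈ LamDeg K q := by
  induction hx using Submodule.span_induction with
  | mem x hx =>
    obtain ⟨s, hcard, rfl⟩ := hx
    have h := Ye_prod_mem Ye hYL hY (s.sort (· ≤ ·)) 0 (Finset.sortedLT_sort s).pairwise
      (fun i _ => Nat.zero_le i)
    rw [Finset.length_sort] at h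
    rw [mono]
    exact Mlow_le_LamDeg q 0 (hcard ▸ h)
  | zero => simp [Submodule.zero_mem]
  | add x y hx hy ihx ihy => rw [map_add]; exact Submodule.add_mem _ ihx ihy
  | smul c x hx ihx => rw [map_smul]; exact Submodule.smul_mem _ _ ihx

end monoLemmas

section phi
variable {K : Type*} [Field K] [CharZero K]

lemma prod_eq_iMulti (l : List ℕ) :
    (l.map (f K)).prod =
      ExteriorAlgebra.ιMulti K l.length (fun i => Finsupp.single (l.get i) (1 : K)) := by
  rw [ExteriorAlgebra.ιMulti_apply]
  congr 1
  rw [← List.ofFn_getElem_eq_map l (f K)]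
  rfl

/-- family of alternating forms picking coordinates along the sorted list of `s` -/
noncomputable def Fam (K : Type*) [Field K] [CharZero K] (s : Finset ℕ) (i : ℕ) :
    (ℕ →₀ K) [⋀^Fin i]→ₗ[K] K :=
  (Matrix.detRowAlternating).compLinearMap
    (LinearMap.pi fun b : Fin i => Finsupp.lapply ((s.sort (· ≤ ·)).getD b 0))

noncomputable def phi (K : Type*) [Field K] [CharZero K] (s : Finset ℕ) :
    ExteriorAlgebra K (ℕ →₀ K) →ₗ[K] K :=
  ExteriorAlgebra.liftAlternating (Fam K s)

lemma phi_list (s : Finset ℕ) (l' : List ℕ) :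
    phi K s ((l'.map (f K)).prod) =
      Matrix.det (fun a b : Fin l'.length =>
        if l'.get a = (s.sort (· ≤ ·)).getD (b : ℕ) 0 then (1 : K) else 0) := by
  rw [prod_eq_iMulti, phi, ExteriorAlgebra.liftAlternating_apply_ιMulti, Fam,
    AlternatingMap.compLinearMap_apply]
  show Matrix.det _ = _
  congr 1
  funext a b
  simp [LinearMap.pi_apply, Finsupp.lapply_apply, Finsupp.single_apply]

lemma phi_mono_self (s : Finset ℕ) : phi K s (mono K s) = 1 := by
  rw [mono, phi_list]
  have h1 : (fun a b : Fin (s.sort (· ≤ ·)).length =>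
      if (s.sort (· ≤ ·)).get a = (s.sort (· ≤ ·)).getD (b : ℕ) 0 then (1 : K) else 0) =
      (1 : Matrix _ _ K) := by
    funext a b
    have hgd : (s.sort (· ≤ ·)).getD (b : ℕ) 0 = (s.sort (· ≤ ·)).get b :=
      List.getD_eq_getElem _ 0 b.isLt
    have hinj := List.nodup_iff_injective_get.mp (Finset.sort_nodup s (· ≤ ·))
    rw [Matrix.one_apply]
    by_cases hab : a = b
    · subst hab; rw [hgd, if_pos rfl, if_pos rfl]
    · rw [if_neg hab, hgd, if_neg (fun hc => hab (hinj hc))]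
  rw [h1, Matrix.det_one]

lemma phi_mono_ne {s s' : Finset ℕ} (h : s'.card = s.card) (hss : s' ≠ s) :
    phi K s (mono K s') = 0 := by
  rw [mono, phi_list]
  have hlen : (s.sort (· ≤ ·)).length = (s'.sort (· ≤ ·)).length := by
    rw [Finset.length_sort, Finset.length_sort, h]
  have hex : ∃ c ∈ s, c ∉ s' := by
    by_contra hcon
    push_neg at hcon
    exact hss (Finset.eq_of_subset_of_card_le (fun c hc => hcon c hc) h.le).symm
  obtain ⟨c, hcs, hcs'⟩ := hex
  have hcl : c ∈ s.sort (· ≤ ·) := (Finset.mem_sort _).mpr hcs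
  obtain ⟨b0, hb0⟩ := List.mem_iff_get.mp hcl
  refine Matrix.det_eq_zero_of_column_eq_zero ⟨(b0 : ℕ), by rw [← hlen]; exact b0.isLt⟩ ?_
  intro a
  have hgd : (s.sort (· ≤ ·)).getD ((b0 : ℕ)) 0 = c := by
    rw [List.getD_eq_getElem _ 0 b0.isLt]
    rw [← hb0]
    rfl
  show (if _ = (s.sort (· ≤ ·)).getD (((⟨(b0 : ℕ), _⟩ : Fin _) : ℕ)) 0 then (1:K) else 0) = 0
  rw [hgd]
  rw [if_neg]
  intro hac
  refine hcs' ?_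
  rw [← hac]
  exact (Finset.mem_sort _).mp (List.get_mem _ _)
end phi

section eig
variable {K : Type*} [Field K] [CharZero K]

lemma span_image_stable {V : Type*} [AddCommGroup V] [Module K V] (T : Module.End K V)
    (w : ℕ → V) (c : ℕ → K) (hw : ∀ k, T (w k) = c k • w k) (F : Finset ℕ) :
    ∀ x ∈ Submodule.span K (w '' (F : Set ℕ)), T x ∈ Submodule.span K (w '' (F : Set ℕ)) := by
  intro x hx
  induction hx using Submodule.span_induction with
  | mem x hx =>
    obtain ⟨k, hk, rfl⟩ := hx
    rw [hw k]
    exact Submodule.smul_mem _ _ (Submodule.subset_span ⟨k, hk, rfl⟩)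
  | zero => simp
  | add x y hx hy ihx ihy => rw [map_add]; exact Submodule.add_mem _ ihx ihy
  | smul a x hx ihx => rw [map_smul]; exact Submodule.smul_mem _ _ ihx

lemma eig_sep {V : Type*} [AddCommGroup V] [Module K V] (T : Module.End K V)
    (w : ℕ → V) (c : ℕ → K) (hw : ∀ k, T (w k) = c k • w k) (hc : Function.Injective c)
    (k0 : ℕ) (F : Finset ℕ) :
    ∀ x : V, T x = c k0 • x → x ∈ Submodule.span K (w '' (F : Set ℕ)) →
      x ∈ Submodule.span K {w k0} := by
  induction F using Finset.induction with
  | empty => intro x _ hx; simp at hx; simp [hx]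
  | @insert a F hna ih =>
    intro x hTx hx
    rw [Finset.coe_insert, Set.image_insert_eq] at hx
    obtain ⟨r, z, hz, hxz⟩ := Submodule.mem_span_insert.mp hx
    by_cases hak : a = k0
    · subst hak
      have hz' : T z = c a • z := by
        have : z = x - r • w a := by rw [hxz]; abel
        rw [this, map_sub, map_smul, hTx, hw a, smul_sub]
        rw [smul_comm]
      have := ih z hz' hz
      rw [hxz]
      exact Submodule.add_mem _ (Submodule.smul_mem _ _ (Submodule.mem_span_singleton_self _)) this
    · have hd : c k0 - c a ≠ 0 := sub_ne_zero_of_ne (fun hcc => hak (hc hcc).symm)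
      have hy : T x - c a • x = (c k0 - c a) • x := by rw [hTx, sub_smul]
      have hy2 : T x - c a • x ∈ Submodule.span K (w '' (F : Set ℕ)) := by
        have hxz' : T x - c a • x = T z - c a • z := by
          rw [hxz, map_add, map_smul, hw a, smul_add]
          rw [smul_comm (c a) r]
          abel
        rw [hxz']
        exact Submodule.sub_mem _ (span_image_stable T w c hw F z hz)
          (Submodule.smul_mem _ _ hz)
      have hxmem : x ∈ Submodule.span K (w '' (F : Set ℕ)) := by
        have : x = (c k0 - c a)⁻¹ • (T x - c a • x) := by
          rw [hy, smul_smul, inv_mul_cancel₀ hd, one_smul]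
        rw [this]
        exact Submodule.smul_mem _ _ hy2
      exact ih x hTx hxmem

lemma mem_span_image_finset {V : Type*} [AddCommGroup V] [Module K V] {w : ℕ → V} {x : V}
    (hx : x ∈ Submodule.span K (Set.range w)) :
    ∃ F : Finset ℕ, x ∈ Submodule.span K (w '' (F : Set ℕ)) := by
  obtain ⟨cf, hcf⟩ := Finsupp.mem_span_range_iff_exists_finsupp.mp hx
  refine ⟨cf.support, ?_⟩
  rw [← hcf]
  refine Submodule.sum_mem _ ?_
  intro k hk
  exact Submodule.smul_mem _ _ (Submodule.subset_span ⟨k, hk, rfl⟩)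

lemma sort_sum (s : Finset ℕ) : (s.sort (· ≤ ·)).sum = ∑ i ∈ s, i := by
  have hperm : List.Perm (s.sort (· ≤ ·)) s.toList := Finset.sort_perm_toList s _
  rw [hperm.sum_eq]
  rw [Finset.sum_eq_multiset_sum]
  simp [Finset.toList]
end eig


set_option maxHeartbeats 1000000 in
/-- For `q ≥ 2` and an infinite-dimensional irreducible highest-weight
`sl(2,K)`-module `V(λ)` (basis `f_i`, `H f_i = (λ-2i) f_i`, `Y f_i = (i+1) f_{i+1}`,
`X f_i = (λ-i+1) f_{i-1}`, with `λ ∉ ℕ`), the `q`-th exterior power `Λ^q(V(λ))`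
— on which `sl(2,K)` acts by the derivations `Xe, Ye, He` extending `X, Y, H` —
is a reducible `sl(2,K)`-module. -/
theorem stmt14 (lam : K) (hlam : ∀ n : ℕ, lam ≠ (n : K))
    (Xe Ye He : Module.End K (ExteriorAlgebra K (ℕ →₀ K)))
    (hXL : ∀ x y, Xe (x * y) = Xe x * y + x * Xe y)
    (hYL : ∀ x y, Ye (x * y) = Ye x * y + x * Ye y)
    (hHL : ∀ x y, He (x * y) = He x * y + x * He y)
    (hX0 : Xe (f K 0) = 0)
    (hX : ∀ i : ℕ, Xe (f K (i + 1)) = (lam - ((i : K) + 1) + 1) • f K i)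
    (hY : ∀ i : ℕ, Ye (f K i) = ((i : K) + 1) • f K (i + 1))
    (hH : ∀ i : ℕ, He (f K i) = (lam - 2 * (i : K)) • f K i)
    (q : ℕ) (hq : 2 ≤ q) :
    ∃ W : Submodule K (ExteriorAlgebra K (ℕ →₀ K)),
      W ≤ LamDeg K q ∧ (∀ w ∈ W, Xe w ∈ W ∧ Ye w ∈ W ∧ He w ∈ W) ∧
        W ≠ ⊥ ∧ W ≠ LamDeg K q := by
  classical
  have hv0l : mono K (Finset.range q) = ((List.range q).map (f K)).prod := by
    rw [mono, Finset.sort_range]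
  set v0 := mono K (Finset.range q) with hv0def
  set u : ℕ → ExteriorAlgebra K (ℕ →₀ K) := fun k => (Ye ^ k) v0 with hudef
  have hu0 : u 0 = v0 := by simp [hudef]
  have husucc : ∀ k, u (k + 1) = Ye (u k) := by
    intro k
    show (Ye ^ (k + 1)) v0 = Ye ((Ye ^ k) v0)
    rw [pow_succ']
    rfl
  have huP : ∀ k, u k ∈ Aux14.P K := by
    intro k
    induction k with
    | zero => rw [hu0, hv0l]; exact Aux14.prod_mem_P _
    | succ k ih =>
      rw [husucc]
      exact Aux14.der_stable Ye hYL (fun i => ⟨(i : K) + 1, i + 1, hY i⟩) _ ih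
  set m0 : ℕ := ∑ i ∈ Finset.range q, i with hm0def
  have hlrs : (List.range q).sum = m0 := by rw [← Finset.sort_range q, sort_sum]
  set c : ℕ → K := fun k => (q : K) * lam - 2 * (m0 : K) - 2 * (k : K) with hcdef
  have hHeu : ∀ k, He (u k) = c k • u k := by
    intro k
    induction k with
    | zero =>
      rw [hu0, hv0l, Aux14.He_prod lam He hHL hH]
      rw [← hv0l]
      congr 1
      rw [hlrs, List.length_range, hcdef]
      push_cast
      ring
    | succ k ih =>
      rw [husucc, Aux14.comm2 lam Ye He hYL hHL hY hH (u k) (huP k), ih, map_smul, ← husucc,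
        ← Nat.cast_smul_eq_nsmul K 2 (u (k+1)), ← sub_smul]
      congr 1
      rw [hcdef]
      push_cast
      ring
  set W := Submodule.span K (Set.range u) with hWdef
  have humem : ∀ k, u k ∈ W := fun k => Submodule.subset_span ⟨k, rfl⟩
  have hYeW : ∀ x ∈ W, Ye x ∈ W := by
    intro x hx
    induction hx using Submodule.span_induction with
    | mem x hx => obtain ⟨k, rfl⟩ := hx; rw [← husucc]; exact humem _
    | zero => simp
    | add x y hx hy ihx ihy => rw [map_add]; exact Submodule.add_mem _ ihx ihy
    | smul a x hx ihx => rw [map_smul]; exact Submodule.smul_mem _ _ ihx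
  have hHeW : ∀ x ∈ W, He x ∈ W := by
    intro x hx
    induction hx using Submodule.span_induction with
    | mem x hx => obtain ⟨k, rfl⟩ := hx; rw [hHeu]; exact Submodule.smul_mem _ _ (humem _)
    | zero => simp
    | add x y hx hy ihx ihy => rw [map_add]; exact Submodule.add_mem _ ihx ihy
    | smul a x hx ihx => rw [map_smul]; exact Submodule.smul_mem _ _ ihx
  have hXeu : ∀ k, Xe (u k) ∈ W := by
    intro k
    induction k with
    | zero =>
      rw [hu0, hv0l, Xe_range_prod lam Xe hXL hX0 hX q]
      simp
    | succ k ih =>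
      rw [husucc, Aux14.comm1 lam Xe Ye He hXL hYL hHL hX0 hX hY hH (u k) (huP k)]
      exact Submodule.add_mem _ (hYeW _ ih) (hHeW _ (humem k))
  have hXeW : ∀ x ∈ W, Xe x ∈ W := by
    intro x hx
    induction hx using Submodule.span_induction with
    | mem x hx => obtain ⟨k, rfl⟩ := hx; exact hXeu k
    | zero => simp
    | add x y hx hy ihx ihy => rw [map_add]; exact Submodule.add_mem _ ihx ihy
    | smul a x hx ihx => rw [map_smul]; exact Submodule.smul_mem _ _ ihx
  have hWle : W ≤ LamDeg K q := by
    rw [hWdef, Submodule.span_le]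
    rintro x ⟨k, rfl⟩
    induction k with
    | zero =>
      rw [hu0, hv0def]
      exact Submodule.subset_span ⟨Finset.range q, Finset.card_range q, rfl⟩
    | succ k ih => rw [husucc]; exact Ye_LamDeg Ye hYL hY q ih
  have hv0ne : v0 ≠ 0 := by
    intro h0
    have := phi_mono_self (K := K) (Finset.range q)
    rw [← hv0def, h0, map_zero] at this
    exact one_ne_zero this.symm
  have hWbot : W ≠ ⊥ := by
    intro hbot
    have := humem 0
    rw [hbot, Submodule.mem_bot, hu0] at this
    exact hv0ne this
  -- the two extra monomials of weight `c 2`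
  set s1 : Finset ℕ := insert (q + 1) (Finset.range (q - 1)) with hs1def
  set s2 : Finset ℕ := insert q (insert (q - 1) (Finset.range (q - 2))) with hs2def
  have hq1 : q - 1 + 1 = q := by omega
  have hq2 : q - 2 + 1 = q - 1 := by omega
  have hm01 : m0 = (∑ i ∈ Finset.range (q - 1), i) + (q - 1) := by
    rw [hm0def, ← hq1, Finset.sum_range_succ, hq1]
  have hm02 : (∑ i ∈ Finset.range (q - 1), i) = (∑ i ∈ Finset.range (q - 2), i) + (q - 2) := by
    rw [← hq2, Finset.sum_range_succ]
  have hs1card : s1.card = q := by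
    rw [hs1def, Finset.card_insert_of_notMem (by simp [Finset.mem_range]; omega),
      Finset.card_range]
    omega
  have hs2card : s2.card = q := by
    rw [hs2def, Finset.card_insert_of_notMem (by simp [Finset.mem_insert, Finset.mem_range]; omega),
      Finset.card_insert_of_notMem (by simp [Finset.mem_range]; omega), Finset.card_range]
    omega
  have hs1sum : (∑ i ∈ s1, i) = m0 + 2 := by
    rw [hs1def, Finset.sum_insert (by simp [Finset.mem_range]; omega)]
    omega
  have hs2sum : (∑ i ∈ s2, i) = m0 + 2 := by
    rw [hs2def, Finset.sum_insert (by simp [Finset.mem_insert, Finset.mem_range]; omega),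
      Finset.sum_insert (by simp [Finset.mem_range]; omega)]
    omega
  have hmono_eig : ∀ s : Finset ℕ, s.card = q → (∑ i ∈ s, i) = m0 + 2 →
      He (mono K s) = c 2 • mono K s := by
    intro s hcard hsum
    rw [mono, Aux14.He_prod lam He hHL hH, ← mono]
    congr 1
    rw [Finset.length_sort, sort_sum, hcard, hsum, hcdef]
    push_cast
    ring
  have hcinj : Function.Injective c := by
    intro j k h
    rw [hcdef] at h
    have h2 : (j : K) = (k : K) := by
      dsimp only at h
      linear_combination (-(1 : K) / 2) * h
    exact_mod_cast h2
  have hs2ne : s2 ≠ s1 := by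
    intro h
    have h1 : q + 1 ∈ s1 := Finset.mem_insert_self _ _
    rw [← h, hs2def] at h1
    simp only [Finset.mem_insert, Finset.mem_range] at h1
    omega
  have key : ∀ s : Finset ℕ, s.card = q → (∑ i ∈ s, i) = m0 + 2 → mono K s ∈ W →
      ∃ α : K, mono K s = α • u 2 := by
    intro s hcard hsum hmem
    rw [hWdef] at hmem
    obtain ⟨F, hF⟩ := mem_span_image_finset hmem
    have := eig_sep He u c hHeu hcinj 2 F (mono K s) (hmono_eig s hcard hsum) hF
    obtain ⟨α, hα⟩ := Submodule.mem_span_singleton.mp this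
    exact ⟨α, hα.symm⟩
  refine ⟨W, hWle, fun w hw => ⟨hXeW w hw, hYeW w hw, hHeW w hw⟩, hWbot, ?_⟩
  intro heq
  have hmem1 : mono K s1 ∈ W := by
    rw [heq]; exact Submodule.subset_span ⟨s1, hs1card, rfl⟩
  have hmem2 : mono K s2 ∈ W := by
    rw [heq]; exact Submodule.subset_span ⟨s2, hs2card, rfl⟩
  obtain ⟨α, hα⟩ := key s1 hs1card hs1sum hmem1
  obtain ⟨β, hβ⟩ := key s2 hs2card hs2sum hmem2
  have e1 : phi K s1 (mono K s1) = 1 := phi_mono_self s1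
  have e2 : phi K s1 (mono K s2) = 0 :=
    phi_mono_ne (by rw [hs2card, hs1card]) hs2ne
  rw [hα, map_smul, smul_eq_mul] at e1
  rw [hβ, map_smul, smul_eq_mul] at e2
  have ht : phi K s1 (u 2) ≠ 0 := by
    intro h0
    rw [h0, mul_zero] at e1
    exact zero_ne_one e1
  have hβ0 : β = 0 := by
    rcases mul_eq_zero.mp e2 with h | h
    · exact h
    · exact absurd h ht
  rw [hβ0, zero_smul] at hβ
  have := phi_mono_self (K := K) s2
  rw [hβ, map_zero] at this
  exact one_ne_zero this.symm
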